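/- arXiv:1307.0804 — 3 statements merged into one kernel-verified Lean document; each statement's English description precedes it below -/
import Mathlib

section
/- Let μ be a locally finite Borel measure on ℝ^n and let m ≥ 1 be a positive integer. If μ is m-rectifiable, then the lower Hausdorff m-density satisfies Θ^m_*(μ,x) > 0 at μ-almost every x ∈ ℝ^n. -/
open MeasureTheory Metric Set Filter
open scoped ENNReal NNReal Topology

noncomputable section

/-- The closed dyadic cube in `ℝⁿ` of generation `k` (side length `2^(-k)`) with corner `z`. -/
def dyadicCube (n : ℕ) (k : ℤ) (z : Fin n → ℤ) : Set (EuclideanSpace ℝ (Fin n)) :=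
  {x | ∀ i, (z i : ℝ) * (2 : ℝ) ^ (-k) ≤ x i ∧ x i ≤ ((z i : ℝ) + 1) * (2 : ℝ) ^ (-k)}

/-- The concentric dilate `λQ` of the dyadic cube `Q` of generation `k` with corner `z`. -/
def dilatedCube (n : ℕ) (lam : ℝ) (k : ℤ) (z : Fin n → ℤ) : Set (EuclideanSpace ℝ (Fin n)) :=
  {x | ∀ i, |x i - ((z i : ℝ) + 1 / 2) * (2 : ℝ) ^ (-k)| ≤ lam * (2 : ℝ) ^ (-k) / 2}

/-- The axis-parallel cube with center `c` and side length `s`. -/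
def axisCube {n : ℕ} (c : EuclideanSpace ℝ (Fin n)) (s : ℝ) : Set (EuclideanSpace ℝ (Fin n)) :=
  {x | ∀ i, |x i - c i| ≤ s / 2}

/-- `L` is an (affine) line in `ℝⁿ`. -/
def IsLine {n : ℕ} (L : Set (EuclideanSpace ℝ (Fin n))) : Prop :=
  ∃ p v : EuclideanSpace ℝ (Fin n), v ≠ 0 ∧ L = {x | ∃ t : ℝ, x = p + t • v}

/-- `β₂(μ,Q)²`, the square of the `L²` beta number of `μ` on `Q`:
`inf_ℓ ∫_Q (dist(x,ℓ)/diam Q)² dμ(x)/μ(Q)`. When `μ Q = 0` this equals `0`,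
since `0/0 = 0` in `ℝ≥0∞`. -/
def beta2Sq {n : ℕ} (μ : Measure (EuclideanSpace ℝ (Fin n)))
    (Q : Set (EuclideanSpace ℝ (Fin n))) : ℝ≥0∞ :=
  ⨅ (L : Set (EuclideanSpace ℝ (Fin n))) (_ : IsLine L),
    (∫⁻ x in Q, ENNReal.ofReal ((Metric.infDist x L / Metric.diam Q) ^ 2) ∂μ) / μ Q

/-- The beta number `β_E(Q) = inf_ℓ sup_{x ∈ E ∩ Q} dist(x,ℓ)/diam Q` of a set `E`;
it is `0` when `E ∩ Q = ∅`. -/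
def betaSet {n : ℕ} (E Q : Set (EuclideanSpace ℝ (Fin n))) : ℝ≥0∞ :=
  ⨅ (L : Set (EuclideanSpace ℝ (Fin n))) (_ : IsLine L),
    ⨆ x ∈ E ∩ Q, ENNReal.ofReal (Metric.infDist x L / Metric.diam Q)

-- The ordinary `L²` Jones function at scale `r`:
-- `J₂(μ,r,x) = Σ_Q β₂²(μ,3Q) χ_Q(x)` over dyadic cubes `Q` of side length at most `r`.
open Classical in
def jones2 {n : ℕ} (μ : Measure (EuclideanSpace ℝ (Fin n))) (r : ℝ)
    (x : EuclideanSpace ℝ (Fin n)) : ℝ≥0∞ :=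
  ∑' (k : ℤ) (z : Fin n → ℤ),
    if (2 : ℝ) ^ (-k) ≤ r ∧ x ∈ dyadicCube n k z then beta2Sq μ (dilatedCube n 3 k z) else 0

-- The density-normalized `L²` Jones function at scale `r`:
-- `J̃₂(μ,r,x) = Σ_Q β₂²(μ,3Q) (diam Q / μ(Q)) χ_Q(x)` over dyadic cubes `Q` of side length
-- at most `r`, with the convention `0/0 = 0` (the term vanishes when `μ Q = 0`).
open Classical in
def jones2Tilde {n : ℕ} (μ : Measure (EuclideanSpace ℝ (Fin n))) (r : ℝ)
    (x : EuclideanSpace ℝ (Fin n)) : ℝ≥0∞ :=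
  ∑' (k : ℤ) (z : Fin n → ℤ),
    if (2 : ℝ) ^ (-k) ≤ r ∧ x ∈ dyadicCube n k z then
      (if μ (dyadicCube n k z) = 0 then 0
       else beta2Sq μ (dilatedCube n 3 k z) * ENNReal.ofReal (Metric.diam (dyadicCube n k z))
              / μ (dyadicCube n k z))
    else 0

/-- A measure `μ` on `ℝⁿ` is `1`-rectifiable: countably many bounded Borel sets `Eᵢ ⊆ ℝ` and
Lipschitz maps `fᵢ : Eᵢ → ℝⁿ` whose images carry the full mass of `μ`. -/
def Is1Rectifiable {n : ℕ} (μ : Measure (EuclideanSpace ℝ (Fin n))) : Prop :=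
  ∃ (E : ℕ → Set ℝ) (f : ℕ → ℝ → EuclideanSpace ℝ (Fin n)),
    (∀ i, Bornology.IsBounded (E i) ∧ MeasurableSet (E i) ∧
      ∃ K : ℝ≥0, LipschitzOnWith K (f i) (E i)) ∧
    μ (Set.univ \ ⋃ i, f i '' E i) = 0

/-- A measure `μ` on `ℝⁿ` is `m`-rectifiable: countably many bounded Borel sets `Eᵢ ⊆ ℝᵐ` and
Lipschitz maps `fᵢ : Eᵢ → ℝⁿ` whose images carry the full mass of `μ`. -/
def IsMRectifiable (m : ℕ) {n : ℕ} (μ : Measure (EuclideanSpace ℝ (Fin n))) : Prop :=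
  ∃ (E : ℕ → Set (EuclideanSpace ℝ (Fin m)))
    (f : ℕ → EuclideanSpace ℝ (Fin m) → EuclideanSpace ℝ (Fin n)),
    (∀ i, Bornology.IsBounded (E i) ∧ MeasurableSet (E i) ∧
      ∃ K : ℝ≥0, LipschitzOnWith K (f i) (E i)) ∧
    μ (Set.univ \ ⋃ i, f i '' E i) = 0

/-- A rectifiable curve in `ℝⁿ`: the image of a Lipschitz map on a compact interval. -/
def IsRectifiableCurve {n : ℕ} (Γ : Set (EuclideanSpace ℝ (Fin n))) : Prop :=
  ∃ (f : ℝ → EuclideanSpace ℝ (Fin n)) (a b : ℝ) (K : ℝ≥0),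
    LipschitzOnWith K f (Set.Icc a b) ∧ Γ = f '' Set.Icc a b

/-- The lower Hausdorff `1`-density `Θ¹_*(μ,x) = liminf_{r→0⁺} μ(B(x,r))/(2r)`. -/
def lowerDensity1 {n : ℕ} (μ : Measure (EuclideanSpace ℝ (Fin n)))
    (x : EuclideanSpace ℝ (Fin n)) : ℝ≥0∞ :=
  Filter.liminf (fun r : ℝ => μ (Metric.closedBall x r) / ENNReal.ofReal (2 * r)) (𝓝[>] 0)

/-- The upper Hausdorff `1`-density `Θ*¹(μ,x) = limsup_{r→0⁺} μ(B(x,r))/(2r)`. -/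
def upperDensity1 {n : ℕ} (μ : Measure (EuclideanSpace ℝ (Fin n)))
    (x : EuclideanSpace ℝ (Fin n)) : ℝ≥0∞ :=
  Filter.limsup (fun r : ℝ => μ (Metric.closedBall x r) / ENNReal.ofReal (2 * r)) (𝓝[>] 0)

/-- The lower Hausdorff `m`-density `Θᵐ_*(μ,x) = liminf_{r→0⁺} μ(B(x,r))/(ω_m rᵐ)`, where
`ω_m` is the Lebesgue volume of the unit ball in `ℝᵐ`. -/
def lowerDensity (m : ℕ) {n : ℕ} (μ : Measure (EuclideanSpace ℝ (Fin n)))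
    (x : EuclideanSpace ℝ (Fin n)) : ℝ≥0∞ :=
  Filter.liminf
    (fun r : ℝ => μ (Metric.closedBall x r) /
      (MeasureTheory.volume (Metric.ball (0 : EuclideanSpace ℝ (Fin m)) 1) *
        ENNReal.ofReal (r ^ m)))
    (𝓝[>] 0)

/-- The `δ`-packing prenumber `P^s_δ(A)`: the supremum of `Σᵢ (2rᵢ)^s` over all countable
packings of `A` by disjoint closed balls centered in `A` of diameter at most `δ`. -/
def packingPreAt {X : Type*} [PseudoMetricSpace X] (s δ : ℝ) (A : Set X) : ℝ≥0∞ :=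
  ⨆ (S : Set (X × ℝ)) (_ : S.Countable)
    (_ : ∀ p ∈ S, p.1 ∈ A ∧ 0 < p.2 ∧ 2 * p.2 ≤ δ)
    (_ : S.Pairwise fun p q => Disjoint (Metric.closedBall p.1 p.2) (Metric.closedBall q.1 q.2)),
    ∑' p : S, ENNReal.ofReal ((2 * p.1.2) ^ s)

/-- The `s`-dimensional packing premeasure `P^s(A) = lim_{δ→0⁺} P^s_δ(A)`; since `P^s_δ(A)`
is nonincreasing in `δ`, the limit equals the infimum over `δ > 0`. -/
def packingPre {X : Type*} [PseudoMetricSpace X] (s : ℝ) (A : Set X) : ℝ≥0∞ :=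
  ⨅ (δ : ℝ) (_ : 0 < δ), packingPreAt s δ A

/-- The `s`-dimensional packing measure
`𝒫^s(A) = inf { Σᵢ P^s(Aᵢ) : A = ⋃ᵢ Aᵢ }`. -/
def packingMeasure {X : Type*} [PseudoMetricSpace X] (s : ℝ) (A : Set X) : ℝ≥0∞ :=
  ⨅ (F : ℕ → Set X) (_ : A = ⋃ i, F i), ∑' i, packingPre s (F i)

lemma aux_piece (n m : ℕ) (μ : Measure (EuclideanSpace ℝ (Fin n)))
    [IsLocallyFiniteMeasure μ]
    (E : Set (EuclideanSpace ℝ (Fin m))) (hE : Bornology.IsBounded E)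
    (f : EuclideanSpace ℝ (Fin m) → EuclideanSpace ℝ (Fin n)) (K : ℝ≥0) (hK : 1 ≤ K)
    (hf : LipschitzOnWith K f E) :
    μ ({x | lowerDensity m μ x = 0} ∩ f '' E) = 0 := by
  classical
  set ω : ℝ≥0∞ := MeasureTheory.volume (Metric.ball (0 : EuclideanSpace ℝ (Fin m)) 1) with hω
  have hω0 : ω ≠ 0 := (measure_ball_pos _ _ one_pos).ne'
  have hωtop : ω ≠ ∞ := measure_ball_lt_top.ne
  have hK0 : (0:ℝ) < (K:ℝ) := lt_of_lt_of_le one_pos (by exact_mod_cast hK)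
  have hK1 : (1:ℝ) ≤ (K:ℝ) := by exact_mod_cast hK
  obtain ⟨RE, hRE⟩ := hE.subset_closedBall (0 : EuclideanSpace ℝ (Fin m))
  set S : Set (EuclideanSpace ℝ (Fin n)) := {x | lowerDensity m μ x = 0} ∩ f '' E with hS
  set V : ℝ≥0∞ := MeasureTheory.volume (Metric.closedBall (0 : EuclideanSpace ℝ (Fin m)) (RE+1))
    with hV
  have hVtop : V ≠ ∞ := measure_closedBall_lt_top.ne
  set c : ℝ≥0∞ := ENNReal.ofReal ((2*(K:ℝ))^m) * V with hc
  have hctop : c ≠ ∞ := ENNReal.mul_ne_top ENNReal.ofReal_ne_top hVtop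
  -- μ S is finite
  have hStop : μ S ≠ ∞ := by
    rcases E.eq_empty_or_nonempty with rfl | ⟨y0, hy0⟩
    · rw [hS]; simp
    · have hb : Bornology.IsBounded (f '' E) := by
        apply Bornology.IsBounded.subset (Metric.isBounded_closedBall
          (x := f y0) (r := (K:ℝ) * (2*RE)))
        rintro _ ⟨y, hy, rfl⟩
        have h1 : dist (f y) (f y0) ≤ (K:ℝ) * dist y y0 := hf.dist_le_mul y hy y0 hy0
        have h2 : dist y y0 ≤ 2 * RE := by
          have h3 := dist_triangle y (0 : EuclideanSpace ℝ (Fin m)) y0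
          have hy1 := mem_closedBall.mp (hRE hy)
          have hy2 := mem_closedBall.mp (hRE hy0)
          rw [dist_comm] at hy2
          linarith
        simp only [mem_closedBall]
        calc dist (f y) (f y0) ≤ (K:ℝ) * dist y y0 := h1
          _ ≤ (K:ℝ) * (2*RE) := by nlinarith [dist_nonneg (x := y) (y := y0)]
      obtain ⟨R2, hR2⟩ := hb.subset_closedBall (0 : EuclideanSpace ℝ (Fin n))
      have : μ S ≤ μ (Metric.closedBall 0 R2) :=
        measure_mono (fun x hx => hR2 hx.2)
      exact (lt_of_le_of_lt this (isCompact_closedBall _ _).measure_lt_top).ne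
  have key : ∀ t : ℝ≥0∞, t ≠ 0 → t ≠ ∞ → μ S ≤ t * c := by
    intro t ht0 httop
    set g : EuclideanSpace ℝ (Fin n) → Set ℝ := fun x =>
      {r | 0 < r ∧ μ (Metric.closedBall x r) ≤ t * (ω * ENNReal.ofReal (r^m))} with hg
    have hgs : ∀ x ∈ S, ∀ δ > 0, (g x ∩ Ioo 0 δ).Nonempty := by
      intro x hx δ hδ
      have hld : lowerDensity m μ x = 0 := hx.1
      have hlt : Filter.liminf
          (fun r : ℝ => μ (Metric.closedBall x r) / (ω * ENNReal.ofReal (r ^ m)))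
          (𝓝[>] 0) < t := by
        rw [lowerDensity, ← hω] at hld
        rw [hld]
        exact pos_iff_ne_zero.mpr ht0
      have hfreq : ∃ᶠ r in 𝓝[>] (0:ℝ),
          μ (Metric.closedBall x r) / (ω * ENNReal.ofReal (r^m)) < t :=
        Filter.frequently_lt_of_liminf_lt (hu := by isBoundedDefault) hlt
      have hev : ∀ᶠ r in 𝓝[>] (0:ℝ), r ∈ Ioo (0:ℝ) δ :=
        Filter.eventually_of_mem (Ioo_mem_nhdsGT_of_mem ⟨le_refl (0:ℝ), hδ⟩) (fun r hr => hr)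
      obtain ⟨r, hr1, hr2⟩ := (hfreq.and_eventually hev).exists
      have hrpos : (0:ℝ) < r := hr2.1
      have hb0 : ω * ENNReal.ofReal (r^m) ≠ 0 :=
        mul_ne_zero hω0 (ENNReal.ofReal_pos.mpr (pow_pos hrpos m)).ne'
      have hbt : ω * ENNReal.ofReal (r^m) ≠ ∞ :=
        ENNReal.mul_ne_top hωtop ENNReal.ofReal_ne_top
      exact ⟨r, ⟨⟨hrpos,
        (ENNReal.div_le_iff_le_mul (Or.inl hb0) (Or.inl hbt)).mp hr1.le⟩, hr2⟩⟩
    obtain ⟨T, rad, hTc, hTS, hrad, hcov, hdisj⟩ :=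
      Besicovitch.exists_disjoint_closedBall_covering_ae μ g S hgs (fun _ => 1)
        (fun _ _ => one_pos)
    have hsel : ∀ x ∈ T, ∃ y, y ∈ E ∧ f y = x := fun x hx => (hTS hx).2
    choose! y hyE hyf using hsel
    -- disjointness of pulled-back balls
    have hmain : ∀ a b : EuclideanSpace ℝ (Fin n), a ∈ T → b ∈ T →
        Disjoint (Metric.closedBall a (rad a)) (Metric.closedBall b (rad b)) →
        dist (y a) (y b) ≤ (rad a + rad b) / (2*(K:ℝ)) → rad b ≤ rad a → 0 < rad b → False := by
      intro a b ha hb hdis hdy hble hrb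
      have hlip : dist (f (y b)) (f (y a)) ≤ (K:ℝ) * dist (y b) (y a) :=
        hf.dist_le_mul _ (hyE b hb) _ (hyE a ha)
      rw [dist_comm (y b) (y a)] at hlip
      have hba : dist b a ≤ rad a := by
        have h4 : (K:ℝ) * dist (y a) (y b) ≤ (rad a + rad b) / 2 := by
          have h5 := mul_le_mul_of_nonneg_left hdy hK0.le
          have h6 : (K:ℝ) * ((rad a + rad b) / (2*(K:ℝ))) = (rad a + rad b) / 2 := by
            field_simp
          rw [h6] at h5
          linarith
        have h7 : dist (f (y b)) (f (y a)) ≤ rad a :=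
          calc dist (f (y b)) (f (y a)) ≤ (K:ℝ) * dist (y a) (y b) := hlip
            _ ≤ (rad a + rad b) / 2 := h4
            _ ≤ rad a := by linarith
        rwa [hyf b hb, hyf a ha] at h7
      exact (Set.disjoint_left.mp hdis (mem_closedBall.mpr hba))
        (mem_closedBall_self hrb.le)
    have hd2 : T.PairwiseDisjoint (fun x => Metric.ball (y x) (rad x / (2*(K:ℝ)))) := by
      intro p hp q hq hpq
      refine Set.disjoint_left.mpr fun z hzp hzq => ?_
      have hballs : Disjoint (Metric.closedBall p (rad p)) (Metric.closedBall q (rad q)) :=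
        hdisj hp hq hpq
      have h1 : dist (y p) (y q) ≤ (rad p + rad q) / (2*(K:ℝ)) := by
        have h3 := dist_triangle (y p) z (y q)
        have a1 := mem_ball.mp hzp
        have a2 := mem_ball.mp hzq
        rw [dist_comm] at a1
        rw [add_div]
        linarith
      have hrp : 0 < rad p := (hrad p hp).2.1
      have hrq : 0 < rad q := (hrad q hq).2.1
      rcases le_total (rad q) (rad p) with h | h
      · exact hmain p q hp hq hballs h1 h hrq
      · refine hmain q p hq hp hballs.symm ?_ h hrp
        rw [dist_comm, add_comm]; exact h1
    -- each small ball is inside the big closed ball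
    have hsub : ∀ x ∈ T, Metric.ball (y x) (rad x / (2*(K:ℝ))) ⊆
        Metric.closedBall (0 : EuclideanSpace ℝ (Fin m)) (RE+1) := by
      intro x hx z hz
      have h1 : dist z (y x) < rad x / (2*(K:ℝ)) := mem_ball.mp hz
      have h2 : dist (y x) 0 ≤ RE := mem_closedBall.mp (hRE (hyE x hx))
      have h3 : rad x / (2*(K:ℝ)) ≤ 1 := by
        have : rad x < 1 := (hrad x hx).2.2
        rw [div_le_one (by positivity)]
        nlinarith
      have := dist_triangle z (y x) 0
      simp only [mem_closedBall]
      linarith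
    -- volume computation for the small balls
    have hballvol : ∀ x ∈ T, ENNReal.ofReal ((rad x)^m) * ω =
        ENNReal.ofReal ((2*(K:ℝ))^m) *
          MeasureTheory.volume (Metric.ball (y x) (rad x / (2*(K:ℝ)))) := by
      intro x hx
      have hrp : 0 < rad x := (hrad x hx).2.1
      rw [Measure.addHaar_ball_of_pos _ _ (by positivity : 0 < rad x / (2*(K:ℝ)))]
      rw [finrank_euclideanSpace_fin, ← hω, ← mul_assoc, ← ENNReal.ofReal_mul (by positivity)]
      congr 2
      rw [div_pow]
      field_simp
    -- the sum bound
    have hsum : ∑' (x : T), (ENNReal.ofReal ((rad (x:EuclideanSpace ℝ (Fin n)))^m) * ω) ≤ c := by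
      have h1 : ∑' (x : T), (ENNReal.ofReal ((rad (x:EuclideanSpace ℝ (Fin n)))^m) * ω)
          = ENNReal.ofReal ((2*(K:ℝ))^m) *
            ∑' (x : T), MeasureTheory.volume
              (Metric.ball (y (x:EuclideanSpace ℝ (Fin n)))
                (rad (x:EuclideanSpace ℝ (Fin n)) / (2*(K:ℝ)))) := by
        rw [← ENNReal.tsum_mul_left]
        exact tsum_congr fun x => hballvol x x.2
      rw [h1, hc]
      refine mul_le_mul_right ?_ _
      rw [← measure_biUnion hTc hd2 (fun x _ => measurableSet_ball)]
      exact measure_mono (Set.iUnion₂_subset hsub)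
    -- putting it together
    have hcover : μ S ≤ ∑' (x : T), μ (Metric.closedBall (x:EuclideanSpace ℝ (Fin n))
        (rad (x:EuclideanSpace ℝ (Fin n)))) := by
      calc μ S ≤ μ (S \ ⋃ x ∈ T, Metric.closedBall x (rad x))
            + μ (⋃ x ∈ T, Metric.closedBall x (rad x)) := by
            refine le_trans (measure_mono ?_) (measure_union_le _ _)
            intro z hz
            by_cases h : z ∈ ⋃ x ∈ T, Metric.closedBall x (rad x)
            · exact Or.inr h
            · exact Or.inl ⟨hz, h⟩
        _ = μ (⋃ x ∈ T, Metric.closedBall x (rad x)) := by rw [hcov, zero_add]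
        _ ≤ _ := measure_biUnion_le μ hTc _
    calc μ S ≤ ∑' (x : T), μ (Metric.closedBall (x:EuclideanSpace ℝ (Fin n))
          (rad (x:EuclideanSpace ℝ (Fin n)))) := hcover
      _ ≤ ∑' (x : T), t * (ω * ENNReal.ofReal
          ((rad (x:EuclideanSpace ℝ (Fin n)))^m)) :=
          Summable.tsum_le_tsum (fun x => (hrad x x.2).1.2) ENNReal.summable ENNReal.summable
      _ = t * ∑' (x : T), (ENNReal.ofReal ((rad (x:EuclideanSpace ℝ (Fin n)))^m) * ω) := by
          rw [← ENNReal.tsum_mul_left]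
          exact tsum_congr fun x => by ring
      _ ≤ t * c := mul_le_mul_right hsum _
  -- conclude μ S = 0
  by_contra hne
  have hpos : 0 < μ S := pos_iff_ne_zero.mpr hne
  rcases eq_or_ne c 0 with hc0 | hc0
  · have := key 1 one_ne_zero ENNReal.one_ne_top
    rw [hc0, mul_zero] at this
    exact hne (le_antisymm this zero_le)
  · have h2c0 : (2:ℝ≥0∞) * c ≠ 0 := mul_ne_zero two_ne_zero hc0
    have h2ct : (2:ℝ≥0∞) * c ≠ ∞ := ENNReal.mul_ne_top ENNReal.ofNat_ne_top hctop
    have htne : μ S / (2 * c) ≠ 0 := by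
      rw [Ne, ENNReal.div_eq_zero_iff]
      rintro (h | h)
      · exact hne h
      · exact h2ct h
    have htne' : μ S / (2 * c) ≠ ∞ := by
      intro h
      rcases ENNReal.div_eq_top.mp h with ⟨_, h0⟩ | ⟨ht, _⟩
      · exact h2c0 h0
      · exact hStop ht
    have := key _ htne htne'
    have hccc : c⁻¹ * (μ S * c) = μ S := by
      rw [mul_comm (μ S) c, ← mul_assoc, ENNReal.inv_mul_cancel hc0 hctop, one_mul]
    have heq : μ S / (2 * c) * c = μ S / 2 := by
      rw [ENNReal.div_eq_inv_mul, ENNReal.mul_inv (Or.inr hctop) (Or.inr hc0)]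
      rw [mul_assoc, mul_assoc, hccc, ENNReal.div_eq_inv_mul]
    rw [heq] at this
    exact absurd this (not_le.mpr (ENNReal.half_lt_self hne hStop))

/-- If `μ` is a locally finite Borel measure on `ℝⁿ` which is
`m`-rectifiable (`m ≥ 1`), then the lower Hausdorff `m`-density satisfies
`Θᵐ_*(μ,x) > 0` at `μ`-a.e. `x ∈ ℝⁿ`. -/
theorem lowerDensity_pos_ae_of_isMRectifiable (n m : ℕ) (hm : 1 ≤ m)
    (μ : Measure (EuclideanSpace ℝ (Fin n))) [IsLocallyFiniteMeasure μ]
    (hμ : IsMRectifiable m μ) :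
    ∀ᵐ x ∂μ, 0 < lowerDensity m μ x := by
  obtain ⟨E, f, hprops, hnull⟩ := hμ
  set N : Set (EuclideanSpace ℝ (Fin n)) := {x | lowerDensity m μ x = 0} with hN
  have hpiece : ∀ i, μ (N ∩ f i '' E i) = 0 := by
    intro i
    obtain ⟨hb, _, K, hKlip⟩ := hprops i
    have hK' : LipschitzOnWith (max K 1) (f i) (E i) := fun x hx y hy =>
      le_trans (hKlip hx hy)
        (mul_le_mul_left (ENNReal.coe_le_coe.mpr (le_max_left K 1)) _)
    exact aux_piece n m μ (E i) hb (f i) (max K 1) (le_max_right _ _) hK'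
  have hbad : μ N = 0 := by
    have hsub : N ⊆ (Set.univ \ ⋃ i, f i '' E i) ∪ ⋃ i, (N ∩ f i '' E i) := by
      intro x hx
      by_cases h : x ∈ ⋃ i, f i '' E i
      · right
        obtain ⟨i, hi⟩ := Set.mem_iUnion.mp h
        exact Set.mem_iUnion.mpr ⟨i, hx, hi⟩
      · left
        exact ⟨Set.mem_univ x, h⟩
    refine le_antisymm ?_ zero_le
    calc μ N ≤ μ ((Set.univ \ ⋃ i, f i '' E i) ∪ ⋃ i, (N ∩ f i '' E i)) :=
          measure_mono hsub
      _ ≤ μ (Set.univ \ ⋃ i, f i '' E i) + μ (⋃ i, (N ∩ f i '' E i)) := measure_union_le _ _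
      _ ≤ 0 + ∑' i, μ (N ∩ f i '' E i) := by
          rw [hnull]
          exact add_le_add le_rfl (measure_iUnion_le _)
      _ = 0 := by simp [hpiece]
  rw [MeasureTheory.ae_iff]
  have : {x | ¬ 0 < lowerDensity m μ x} = N := by
    ext x
    simp [hN, pos_iff_ne_zero]
  rw [this]
  exact hbad

end
end

section
/- Let s ≥ 0 and let μ be a locally finite Borel measure on ℝ^n. Then μ is absolutely continuous with respect to the s-dimensional Hausdorff measure H^s if and only if the upper Hausdorff s-density satisfies Θ*^s(μ,x) < ∞ at μ-almost every x ∈ ℝ^n. -/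
open MeasureTheory Metric Set Filter
open scoped ENNReal NNReal Topology

noncomputable section

section AuxDensity

lemma emetric_diam_closedBall {X : Type*} [PseudoMetricSpace X] (x : X) {r : ℝ} (_ : 0 ≤ r) :
    EMetric.diam (Metric.closedBall x r) ≤ ENNReal.ofReal (2 * r) := by
  refine EMetric.diam_le fun a ha b hb => ?_
  rw [edist_dist]
  refine ENNReal.ofReal_le_ofReal ((dist_triangle_right a b x).trans ?_)
  have h1 := mem_closedBall.mp ha
  have h2 := mem_closedBall.mp hb
  linarith

variable {n : ℕ}

lemma aux_exists_large_ball (s ω : ℝ) (hω : 0 < ω)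
    (μ : Measure (EuclideanSpace ℝ (Fin n))) (x : EuclideanSpace ℝ (Fin n))
    (hx : Filter.limsup
        (fun r : ℝ => μ (Metric.closedBall x r) / ENNReal.ofReal (ω * r ^ s)) (𝓝[>] 0) = ⊤)
    (t δ : ℝ) (ht : 0 < t) (hδ : 0 < δ) :
    ∃ ρ : ℝ, 0 < ρ ∧ ρ ≤ δ ∧
      ENNReal.ofReal (t * ω * ρ ^ s) ≤ μ (Metric.closedBall x ρ) := by
  by_contra h
  push_neg at h
  have hev : ∀ᶠ r in 𝓝[>] (0:ℝ),
      μ (Metric.closedBall x r) / ENNReal.ofReal (ω * r ^ s) ≤ ENNReal.ofReal t := by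
    filter_upwards [Ioo_mem_nhdsGT_of_mem (show (0:ℝ) ∈ Ico 0 δ from ⟨le_rfl, hδ⟩)]
      with r hr
    have hrs : 0 < ω * r ^ s := mul_pos hω (Real.rpow_pos_of_pos hr.1 s)
    have hlt := h r hr.1 hr.2.le
    rw [ENNReal.div_le_iff_le_mul (Or.inl (ENNReal.ofReal_pos.mpr hrs).ne') (Or.inl ENNReal.ofReal_ne_top)]
    calc μ (Metric.closedBall x r) ≤ ENNReal.ofReal (t * ω * r ^ s) := hlt.le
      _ = ENNReal.ofReal t * ENNReal.ofReal (ω * r ^ s) := by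
          rw [← ENNReal.ofReal_mul ht.le, mul_assoc]
  have := Filter.limsup_le_of_le (by isBoundedDefault) hev
  rw [hx] at this
  exact ENNReal.ofReal_ne_top (top_le_iff.mp this)

lemma aux_hausdorff_null (s : ℝ) (hs : 0 ≤ s) (ω : ℝ) (hω : 0 < ω)
    (μ : Measure (EuclideanSpace ℝ (Fin n))) [IsLocallyFiniteMeasure μ] :
    μH[s] {x : EuclideanSpace ℝ (Fin n) |
      Filter.limsup (fun r : ℝ => μ (Metric.closedBall x r) / ENNReal.ofReal (ω * r ^ s))
        (𝓝[>] 0) = ⊤} = 0 := by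
  set E := {x : EuclideanSpace ℝ (Fin n) |
      Filter.limsup (fun r : ℝ => μ (Metric.closedBall x r) / ENNReal.ofReal (ω * r ^ s))
        (𝓝[>] 0) = ⊤} with hEdef
  have hE : E = ⋃ j : ℕ, E ∩ Metric.ball 0 j := by
    ext x
    simp only [mem_iUnion, mem_inter_iff]
    constructor
    · intro hx
      obtain ⟨j, hj⟩ := exists_nat_gt (dist x 0)
      exact ⟨j, hx, mem_ball.mpr hj⟩
    · rintro ⟨j, hx, -⟩; exact hx
  rw [hE]
  refine measure_iUnion_null fun j => ?_
  have hC : μ (Metric.closedBall (0 : EuclideanSpace ℝ (Fin n)) (j+5)) ≠ ⊤ :=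
    (isCompact_closedBall _ _).measure_lt_top.ne
  have key : ∀ m : ℕ, μH[s] (E ∩ Metric.ball 0 j) ≤
      ENNReal.ofReal (8 ^ s / (((m : ℝ) + 1) * ω)) *
        μ (Metric.closedBall (0 : EuclideanSpace ℝ (Fin n)) (j+5)) := by
    intro m
    set t : ℝ := (m : ℝ) + 1 with htdef
    have ht : 0 < t := by positivity
    have htω : 0 < t * ω := mul_pos ht hω
    -- construction of a good packing at each scale
    have hconstr : ∀ k : ℕ, ∃ (u : Set (EuclideanSpace ℝ (Fin n)))
        (ρ : EuclideanSpace ℝ (Fin n) → ℝ),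
        u.Countable ∧ u ⊆ E ∩ Metric.ball 0 j ∧
        (∀ b ∈ u, 0 < ρ b ∧ ρ b ≤ min (1/((k:ℝ)+1)) 1 ∧
          ENNReal.ofReal (t * ω * ρ b ^ s) ≤ μ (Metric.closedBall b (ρ b))) ∧
        u.PairwiseDisjoint (fun b => Metric.closedBall b (ρ b)) ∧
        (E ∩ Metric.ball 0 j ⊆ ⋃ b ∈ u, Metric.closedBall b (4 * ρ b)) := by
      intro k
      classical
      set δ : ℝ := min (1/((k:ℝ)+1)) 1 with hδdef
      have hδ : 0 < δ := lt_min (by positivity) one_pos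
      set P : EuclideanSpace ℝ (Fin n) → ℝ := fun x =>
        if h : x ∈ E ∩ Metric.ball 0 j then
          (aux_exists_large_ball s ω hω μ x h.1 t δ ht hδ).choose else 0 with hPdef
      have hP : ∀ x ∈ E ∩ Metric.ball 0 j, 0 < P x ∧ P x ≤ δ ∧
          ENNReal.ofReal (t * ω * P x ^ s) ≤ μ (Metric.closedBall x (P x)) := by
        intro x hx
        simp only [hPdef, dif_pos hx]
        exact (aux_exists_large_ball s ω hω μ x hx.1 t δ ht hδ).choose_spec
      obtain ⟨u, hu_sub, hu_disj, hu_cov⟩ :=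
        Vitali.exists_disjoint_subfamily_covering_enlargement_closedBall
          (E ∩ Metric.ball 0 j) id P δ (fun a ha => (hP a ha).2.1) 4 (by norm_num)
      simp only [id] at hu_disj hu_cov
      have hcnt : u.Countable := by
        have hdisj' : Pairwise (Function.onFun Disjoint fun b : ↥u => Metric.closedBall (b : EuclideanSpace ℝ (Fin n)) (P b)) :=
          fun b c hbc => hu_disj b.2 c.2 (fun h => hbc (Subtype.ext h))
        have hcnt' := MeasureTheory.Measure.countable_meas_pos_of_disjoint_iUnion
          (μ := μ) (fun i : ↥u => measurableSet_closedBall) hdisj'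
        have huniv : {i : ↥u | 0 < μ (Metric.closedBall (i : EuclideanSpace ℝ (Fin n)) (P i))}
            = univ := by
          refine eq_univ_of_forall fun b => ?_
          have hb := hP b (hu_sub b.2)
          have : (0:ℝ≥0∞) < ENNReal.ofReal (t * ω * P b ^ s) :=
            ENNReal.ofReal_pos.mpr (by
              have := Real.rpow_pos_of_pos hb.1 s
              positivity)
          exact this.trans_le hb.2.2
        rw [← Set.countable_coe_iff]
        rw [huniv] at hcnt'
        exact Set.countable_univ_iff.mp hcnt'
      refine ⟨u, P, hcnt, hu_sub, fun b hb => hP b (hu_sub hb), hu_disj, ?_⟩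
      intro x hx
      obtain ⟨b, hb, hsubb⟩ := hu_cov x hx
      exact mem_biUnion hb (hsubb (mem_closedBall_self (hP x hx).1.le))
    choose u ρ hcount hsub hρ hdisj hcov using hconstr
    haveI : ∀ k, Countable ↥(u k) := fun k => (hcount k).to_subtype
    have hmain := MeasureTheory.Measure.hausdorffMeasure_le_liminf_tsum (ι := fun k => ↥(u k)) s
      (E ∩ Metric.ball 0 j)
      (l := atTop) (fun k => ENNReal.ofReal (8 * min (1/((k:ℝ)+1)) 1))
      ?_ (fun k b => Metric.closedBall (b : EuclideanSpace ℝ (Fin n)) (4 * ρ k b))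
      ?_ ?_
    · refine hmain.trans ?_
      refine Filter.liminf_le_of_frequently_le' (Frequently.of_forall fun k => ?_)
      have hterm : ∀ b : ↥(u k),
          EMetric.diam (Metric.closedBall (b : EuclideanSpace ℝ (Fin n)) (4 * ρ k b)) ^ s ≤
            ENNReal.ofReal (8 ^ s / (t * ω)) * μ (Metric.closedBall (b : EuclideanSpace ℝ (Fin n)) (ρ k b)) := by
        intro b
        obtain ⟨hb1, hb2, hb3⟩ := hρ k b b.2
        have h1 : EMetric.diam (Metric.closedBall (b : EuclideanSpace ℝ (Fin n)) (4 * ρ k b)) ^ s ≤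
            (ENNReal.ofReal (8 * ρ k b)) ^ s := by
          refine ENNReal.rpow_le_rpow ?_ hs
          refine (emetric_diam_closedBall _ (by linarith)).trans ?_
          exact ENNReal.ofReal_le_ofReal (by linarith)
        refine h1.trans ?_
        rw [ENNReal.ofReal_rpow_of_pos (by linarith)]
        have h2 : (8 * ρ k b) ^ s = 8 ^ s * ρ k b ^ s :=
          Real.mul_rpow (by norm_num) hb1.le
        rw [h2, ENNReal.ofReal_mul (Real.rpow_nonneg (by norm_num) s)]
        have h3 : ENNReal.ofReal (ρ k b ^ s) ≤
            μ (Metric.closedBall (b : EuclideanSpace ℝ (Fin n)) (ρ k b)) / ENNReal.ofReal (t * ω) := by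
          rw [ENNReal.le_div_iff_mul_le (Or.inl (ENNReal.ofReal_pos.mpr htω).ne')
            (Or.inl ENNReal.ofReal_ne_top)]
          rw [← ENNReal.ofReal_mul (Real.rpow_nonneg hb1.le s), mul_comm]
          exact hb3
        calc ENNReal.ofReal (8 ^ s) * ENNReal.ofReal (ρ k b ^ s)
            ≤ ENNReal.ofReal (8 ^ s) *
              (μ (Metric.closedBall (b : EuclideanSpace ℝ (Fin n)) (ρ k b)) / ENNReal.ofReal (t * ω)) :=
              mul_le_mul_right h3 _
          _ = ENNReal.ofReal (8 ^ s / (t * ω)) * μ (Metric.closedBall (b : EuclideanSpace ℝ (Fin n)) (ρ k b)) := by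
              rw [ENNReal.ofReal_div_of_pos htω, div_eq_mul_inv, div_eq_mul_inv, mul_assoc,
                mul_comm (μ _), ← mul_assoc]
      calc (∑' b : ↥(u k), EMetric.diam (Metric.closedBall (b : EuclideanSpace ℝ (Fin n)) (4 * ρ k b)) ^ s)
          ≤ ∑' b : ↥(u k), ENNReal.ofReal (8 ^ s / (t * ω)) *
              μ (Metric.closedBall (b : EuclideanSpace ℝ (Fin n)) (ρ k b)) :=
            ENNReal.tsum_le_tsum hterm
        _ = ENNReal.ofReal (8 ^ s / (t * ω)) *
              ∑' b : ↥(u k), μ (Metric.closedBall (b : EuclideanSpace ℝ (Fin n)) (ρ k b)) :=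
            ENNReal.tsum_mul_left
        _ ≤ ENNReal.ofReal (8 ^ s / (t * ω)) *
              μ (Metric.closedBall (0 : EuclideanSpace ℝ (Fin n)) (j+5)) := by
            refine mul_le_mul_right ?_ _
            rw [← measure_iUnion ?_ (fun b => measurableSet_closedBall)]
            · refine measure_mono ?_
              refine iUnion_subset fun b => ?_
              intro y hy
              obtain ⟨hb1, hb2, -⟩ := hρ k b b.2
              have hbj : dist (b : EuclideanSpace ℝ (Fin n)) 0 < j := mem_ball.mp (hsub k b.2).2
              have : dist y 0 ≤ dist y (b : EuclideanSpace ℝ (Fin n)) + dist (b : EuclideanSpace ℝ (Fin n)) 0 :=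
                dist_triangle _ _ _
              have hy' := mem_closedBall.mp hy
              have hb2' : ρ k b ≤ 1 := hb2.trans (min_le_right _ _)
              exact mem_closedBall.mpr (by linarith)
            · exact fun b c hbc => hdisj k b.2 c.2 (fun h => hbc (Subtype.ext h))
        _ = ENNReal.ofReal (8 ^ s / (((m:ℝ) + 1) * ω)) *
              μ (Metric.closedBall (0 : EuclideanSpace ℝ (Fin n)) (j+5)) := by rw [htdef]
    · -- tendsto of scales
      have h0 : Tendsto (fun k : ℕ => 8 * min (1/((k:ℝ)+1)) 1) atTop (𝓝 0) := by
        have h1 : Tendsto (fun k : ℕ => 8 * (1/(k+1:ℝ))) atTop (𝓝 0) := by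
          have := tendsto_one_div_add_atTop_nhds_zero_nat.const_mul (8:ℝ)
          simpa using this
        refine squeeze_zero (fun k => by positivity) (fun k => ?_) h1
        have : min (1/((k:ℝ)+1)) 1 ≤ 1/(k+1:ℝ) := min_le_left _ _
        linarith
      have := ENNReal.tendsto_ofReal h0
      simpa using this
    · refine Eventually.of_forall fun k => fun b => ?_
      obtain ⟨hb1, hb2, -⟩ := hρ k b b.2
      refine (emetric_diam_closedBall _ (by linarith)).trans ?_
      exact ENNReal.ofReal_le_ofReal (by linarith)
    · refine Eventually.of_forall fun k => fun x hx => ?_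
      obtain ⟨b, hb, hxb⟩ := mem_iUnion₂.mp (hcov k hx)
      exact mem_iUnion.mpr ⟨⟨b, hb⟩, hxb⟩
  -- conclusion: let m → ∞
  have htend : Tendsto (fun m : ℕ => ENNReal.ofReal (8 ^ s / (((m : ℝ) + 1) * ω)) *
      μ (Metric.closedBall (0 : EuclideanSpace ℝ (Fin n)) (j+5))) atTop (𝓝 0) := by
    have h1 : Tendsto (fun m : ℕ => 8 ^ s / (((m : ℝ) + 1) * ω)) atTop (𝓝 0) := by
      have h2 : ∀ m : ℕ, 8 ^ s / (((m : ℝ) + 1) * ω) = (8 ^ s / ω) * (1/((m:ℝ)+1)) := by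
        intro m
        rw [div_mul_div_comm, mul_one, mul_comm ω]
      simp_rw [h2]
      have := tendsto_one_div_add_atTop_nhds_zero_nat.const_mul ((8:ℝ) ^ s / ω)
      simpa using this
    have h3 := ENNReal.tendsto_ofReal h1
    simp only [ENNReal.ofReal_zero] at h3
    have := ENNReal.Tendsto.mul_const h3 (Or.inr hC)
    simpa using this
  have hle := ge_of_tendsto htend (Eventually.of_forall key)
  exact le_antisymm hle (zero_le)

lemma aux_ac (s : ℝ) (hs : 0 < s) (ω : ℝ) (hω : 0 < ω)
    (μ : Measure (EuclideanSpace ℝ (Fin n))) [IsLocallyFiniteMeasure μ]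
    (hae : ∀ᵐ x ∂μ,
      Filter.limsup (fun r : ℝ => μ (Metric.closedBall x r) / ENNReal.ofReal (ω * r ^ s))
        (𝓝[>] 0) < ⊤) :
    μ ≪ μH[s] := by
  intro A hA
  set S : ℕ → ℕ → Set (EuclideanSpace ℝ (Fin n)) := fun M k =>
    {x | x ∈ A ∧ ∀ r : ℝ, 0 < r → r ≤ 1/((k:ℝ)+1) →
      μ (Metric.closedBall x r) ≤ (M : ℝ≥0∞) * ENNReal.ofReal (ω * r ^ s)} with hSdef
  -- each S M k is null
  have hSnull : ∀ M k : ℕ, μ (S M k) = 0 := by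
    intro M k
    have hbound : ∀ p : ℕ, μ (S M k) ≤
        ((M : ℝ≥0∞) * ENNReal.ofReal ω) * ENNReal.ofReal (1/((p:ℝ)+1)) := by
      intro p
      -- extract a fine cover with small sum from `μH[s] A = 0`
      have h1 : (⨅ (T : ℕ → Set (EuclideanSpace ℝ (Fin n))) (_ : A ⊆ ⋃ m, T m)
          (_ : ∀ m, EMetric.diam (T m) ≤ ENNReal.ofReal (1/((k:ℝ)+1))),
          ∑' m, ⨆ _ : (T m).Nonempty, EMetric.diam (T m) ^ s) ≤ 0 := by
        rw [← hA, Measure.hausdorffMeasure_apply]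
        exact le_iSup₂ (f := fun (r : ℝ≥0∞) (_ : 0 < r) =>
          ⨅ (T : ℕ → Set (EuclideanSpace ℝ (Fin n))) (_ : A ⊆ ⋃ m, T m)
            (_ : ∀ m, EMetric.diam (T m) ≤ r),
            ∑' m, ⨆ _ : (T m).Nonempty, EMetric.diam (T m) ^ s)
          (ENNReal.ofReal (1/((k:ℝ)+1))) (ENNReal.ofReal_pos.mpr (by positivity))
      have h2 : (⨅ (T : ℕ → Set (EuclideanSpace ℝ (Fin n))) (_ : A ⊆ ⋃ m, T m)
          (_ : ∀ m, EMetric.diam (T m) ≤ ENNReal.ofReal (1/((k:ℝ)+1))),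
          ∑' m, ⨆ _ : (T m).Nonempty, EMetric.diam (T m) ^ s) <
          ENNReal.ofReal (1/((p:ℝ)+1)) :=
        lt_of_le_of_lt h1 (ENNReal.ofReal_pos.mpr (by positivity))
      simp only [iInf_lt_iff] at h2
      obtain ⟨T, hTcov, hTdiam, hTsum⟩ := h2
      have hterm : ∀ m : ℕ, μ (T m ∩ S M k) ≤
          ((M : ℝ≥0∞) * ENNReal.ofReal ω) *
            (⨆ _ : (T m).Nonempty, EMetric.diam (T m) ^ s) := by
        intro m
        rcases eq_empty_or_nonempty (T m ∩ S M k) with he | ⟨x, hxT, hxS⟩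
        · rw [he, measure_empty]; exact zero_le
        have hne : (T m).Nonempty := ⟨x, hxT⟩
        rw [iSup_pos hne]
        have hdfin : EMetric.diam (T m) ≠ ⊤ :=
          (lt_of_le_of_lt (hTdiam m) ENNReal.ofReal_lt_top).ne
        set d : ℝ := (EMetric.diam (T m)).toReal with hddef
        have hTsub : T m ⊆ Metric.closedBall x d := by
          intro y hy
          rw [Metric.mem_closedBall, dist_edist]
          exact ENNReal.toReal_mono hdfin (EMetric.edist_le_diam_of_mem hy hxT)
        rcases eq_or_lt_of_le (show (0:ℝ) ≤ d from ENNReal.toReal_nonneg) with h0 | h0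
        · -- degenerate case : `T m` is a subsingleton of a point of measure zero
          have hxnull : μ {x} = 0 := by
            have htend : Tendsto (fun r : ℝ => (M : ℝ≥0∞) * ENNReal.ofReal (ω * r ^ s))
                (𝓝[>] (0:ℝ)) (𝓝 0) := by
              have t1 : Tendsto (fun r : ℝ => r ^ s) (𝓝[>] (0:ℝ)) (𝓝 0) := by
                have := (Real.continuousAt_rpow_const 0 s (Or.inr hs.le)).tendsto
                rw [Real.zero_rpow hs.ne'] at this
                exact this.mono_left nhdsWithin_le_nhds
              have t2 : Tendsto (fun r : ℝ => ω * r ^ s) (𝓝[>] (0:ℝ)) (𝓝 0) := by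
                have := t1.const_mul ω
                simpa using this
              have t3 := ENNReal.tendsto_ofReal t2
              simp only [ENNReal.ofReal_zero] at t3
              have := ENNReal.Tendsto.const_mul (a := (M:ℝ≥0∞)) t3
                (Or.inr ENNReal.coe_ne_top)
              simpa using this
            have hev : ∀ᶠ r in 𝓝[>] (0:ℝ),
                μ {x} ≤ (M : ℝ≥0∞) * ENNReal.ofReal (ω * r ^ s) := by
              filter_upwards [Ioo_mem_nhdsGT_of_mem
                (show (0:ℝ) ∈ Ico 0 (1/((k:ℝ)+1)) from ⟨le_rfl, by positivity⟩)] with r hr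
              refine le_trans ?_ (hxS.2 r hr.1 hr.2.le)
              exact measure_mono (singleton_subset_iff.mpr (mem_closedBall_self hr.1.le))
            simpa using ge_of_tendsto htend hev
          have hsub : T m ∩ S M k ⊆ {x} := by
            intro y hy
            have hsubsing : (T m).Subsingleton := EMetric.diam_eq_zero_iff.mp (by
              rcases (ENNReal.toReal_eq_zero_iff _).mp h0.symm with h | h
              · exact h
              · exact absurd h hdfin)
            exact mem_singleton_iff.mpr (hsubsing hy.1 hxT)
          calc μ (T m ∩ S M k) ≤ μ {x} := measure_mono hsub
            _ = 0 := hxnull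
            _ ≤ _ := zero_le
        · -- nondegenerate case
          have hd1 : d ≤ 1/((k:ℝ)+1) := by
            have := ENNReal.toReal_mono ENNReal.ofReal_ne_top (hTdiam m)
            rwa [ENNReal.toReal_ofReal (by positivity)] at this
          calc μ (T m ∩ S M k) ≤ μ (Metric.closedBall x d) :=
              measure_mono (inter_subset_left.trans hTsub)
            _ ≤ (M : ℝ≥0∞) * ENNReal.ofReal (ω * d ^ s) := hxS.2 d h0 hd1
            _ = (M : ℝ≥0∞) * ENNReal.ofReal ω * EMetric.diam (T m) ^ s := by
                rw [ENNReal.ofReal_mul hω.le, ← ENNReal.ofReal_rpow_of_pos h0,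
                  ENNReal.ofReal_toReal hdfin, mul_assoc]
      calc μ (S M k) ≤ μ (⋃ m, T m ∩ S M k) := by
            refine measure_mono fun x hx => ?_
            obtain ⟨m, hm⟩ := mem_iUnion.mp (hTcov hx.1)
            exact mem_iUnion.mpr ⟨m, hm, hx⟩
        _ ≤ ∑' m, μ (T m ∩ S M k) := measure_iUnion_le _
        _ ≤ ∑' m, ((M : ℝ≥0∞) * ENNReal.ofReal ω) *
              (⨆ _ : (T m).Nonempty, EMetric.diam (T m) ^ s) := ENNReal.tsum_le_tsum hterm
        _ = ((M : ℝ≥0∞) * ENNReal.ofReal ω) *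
              ∑' m, (⨆ _ : (T m).Nonempty, EMetric.diam (T m) ^ s) := ENNReal.tsum_mul_left
        _ ≤ ((M : ℝ≥0∞) * ENNReal.ofReal ω) * ENNReal.ofReal (1/((p:ℝ)+1)) :=
            mul_le_mul_right hTsum.le _
    -- let `p → ∞`
    have htend : Tendsto (fun p : ℕ => ((M : ℝ≥0∞) * ENNReal.ofReal ω) *
        ENNReal.ofReal (1/((p:ℝ)+1))) atTop (𝓝 0) := by
      have t1 := ENNReal.tendsto_ofReal tendsto_one_div_add_atTop_nhds_zero_nat
      simp only [ENNReal.ofReal_zero] at t1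
      have := ENNReal.Tendsto.const_mul (a := (M:ℝ≥0∞) * ENNReal.ofReal ω) t1
        (Or.inr (ENNReal.mul_ne_top ENNReal.coe_ne_top ENNReal.ofReal_ne_top))
      simpa using this
    simpa using le_antisymm (ge_of_tendsto htend (Eventually.of_forall hbound)) (zero_le)
  -- combine
  set G := {x : EuclideanSpace ℝ (Fin n) |
    Filter.limsup (fun r : ℝ => μ (Metric.closedBall x r) / ENNReal.ofReal (ω * r ^ s))
      (𝓝[>] 0) < ⊤} with hGdef
  have hGc : μ Gᶜ = 0 := by
    rw [ae_iff] at hae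
    exact hae
  have hAG : A ∩ G ⊆ ⋃ M : ℕ, ⋃ k : ℕ, S M k := by
    rintro x ⟨hxA, hxG⟩
    obtain ⟨M, hM⟩ := ENNReal.exists_nat_gt hxG.ne
    have hev := Filter.eventually_lt_of_limsup_lt hM
    obtain ⟨ε, hε, hsub⟩ := mem_nhdsGT_iff_exists_Ioc_subset.mp hev
    obtain ⟨k, hk⟩ := exists_nat_one_div_lt (mem_Ioi.mp hε)
    refine mem_iUnion.mpr ⟨M, mem_iUnion.mpr ⟨k, hxA, fun r hr hr' => ?_⟩⟩
    have hrε : r ∈ Ioc (0:ℝ) ε := ⟨hr, hr'.trans hk.le⟩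
    have := hsub hrε
    simp only [mem_setOf_eq] at this
    have hrs : 0 < ω * r ^ s := mul_pos hω (Real.rpow_pos_of_pos hr s)
    rw [ENNReal.div_lt_iff (Or.inl (ENNReal.ofReal_pos.mpr hrs).ne')
      (Or.inl ENNReal.ofReal_ne_top)] at this
    exact this.le
  have hAGnull : μ (A ∩ G) = 0 := by
    refine le_antisymm ?_ (zero_le)
    refine le_trans (measure_mono hAG) ?_
    rw [measure_iUnion_null fun M => measure_iUnion_null fun k => hSnull M k]
  have hfin : μ A ≤ 0 := calc
    μ A ≤ μ ((A ∩ G) ∪ Gᶜ) := measure_mono (fun x hx => by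
        by_cases hg : x ∈ G
        · exact Or.inl ⟨hx, hg⟩
        · exact Or.inr hg)
    _ ≤ μ (A ∩ G) + μ Gᶜ := measure_union_le _ _
    _ = 0 := by rw [hAGnull, hGc, add_zero]
  simpa using hfin


end AuxDensity

/-- Let `s ≥ 0`, let `ω_s > 0` be a normalizing constant, and let `μ` be a
locally finite Borel measure on `ℝⁿ`. Then `μ ≪ H^s` iff the upper Hausdorff `s`-density
`Θ*^s(μ,x) = limsup_{r→0⁺} μ(B(x,r))/(ω_s r^s)` is finite at `μ`-a.e. `x ∈ ℝⁿ`. -/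
theorem absolutelyContinuous_hausdorff_iff_upperDensity_lt_top_ae (n : ℕ) (s : ℝ)
    (hs : 0 ≤ s) (ω : ℝ) (hω : 0 < ω)
    (μ : Measure (EuclideanSpace ℝ (Fin n))) [IsLocallyFiniteMeasure μ] :
    μ ≪ μH[s] ↔
      ∀ᵐ x ∂μ,
        Filter.limsup
            (fun r : ℝ => μ (Metric.closedBall x r) / ENNReal.ofReal (ω * r ^ s)) (𝓝[>] 0)
          < ⊤ := by
  constructor
  · intro hac
    have h1 := hac (aux_hausdorff_null s hs ω hω μ)
    rw [ae_iff]
    simpa [not_lt, top_le_iff] using h1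
  · intro hae
    rcases hs.eq_or_lt with h0 | h0
    · intro A hA
      have hAe : A = ∅ := by
        by_contra hne
        obtain ⟨x, hx⟩ := nonempty_iff_ne_empty.mpr hne
        have h1 : μH[s] {x} ≤ μH[s] A := measure_mono (singleton_subset_iff.mpr hx)
        rw [hA, ← h0, MeasureTheory.Measure.hausdorffMeasure_zero_singleton] at h1
        simp at h1
      rw [hAe]
      exact measure_empty
    · exact aux_ac s h0 ω hω μ hae

end
end

section
/- Let n ≥ 2, let ν be a finite Borel measure on ℝ^n, let Γ ⊂ ℝ^n be a rectifiable curve, and let Q be a cube with Q ∩ Γ ≠ ∅ and ν(Q) > 0. Let a = 3 + 6√n and suppose ε > 0 satisfies 3(2/3)²a²ε² ≤ 1/2. If β_Γ(aQ) < ε β₂(ν,3Q), then β₂(ν,3Q)² ≤ 4 ∫_F (dist(x,Γ)/diam 3Q)² dν(x)/ν(3Q), where F = {x ∈ 3Q : dist(x,ℓ) > (2/3)aε β₂(ν,3Q) diam 3Q} for any line ℓ achieving sup_{z ∈ Γ∩aQ} dist(z,ℓ) ≤ 2β_Γ(aQ) diam aQ. -/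
open MeasureTheory Metric Set Filter
open scoped ENNReal NNReal Topology

noncomputable section

lemma coord_abs_le_dist {n : ℕ} (x y : EuclideanSpace ℝ (Fin n)) (i : Fin n) :
    |x i - y i| ≤ dist x y := by
  rw [EuclideanSpace.dist_eq, ← Real.sqrt_sq_eq_abs]
  apply Real.sqrt_le_sqrt
  have h := Finset.single_le_sum (f := fun j => dist (x j) (y j) ^ 2)
    (fun j _ => sq_nonneg _) (Finset.mem_univ i)
  simpa [Real.dist_eq] using h

lemma dist_le_of_coord {n : ℕ} {x y : EuclideanSpace ℝ (Fin n)} {r : ℝ} (hr : 0 ≤ r)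
    (h : ∀ i, |x i - y i| ≤ r) : dist x y ≤ r * Real.sqrt n := by
  rw [EuclideanSpace.dist_eq]
  have h1 : ∑ i, dist (x i) (y i) ^ 2 ≤ ∑ _i : Fin n, r ^ 2 := by
    refine Finset.sum_le_sum fun i _ => ?_
    rw [Real.dist_eq]
    calc |x i - y i| ^ 2 = |x i - y i| * |x i - y i| := by ring
      _ ≤ r * r := mul_le_mul (h i) (h i) (abs_nonneg _) hr
      _ = r ^ 2 := by ring
  calc Real.sqrt (∑ i, dist (x i) (y i) ^ 2) ≤ Real.sqrt ((n : ℝ) * r ^ 2) := by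
        apply Real.sqrt_le_sqrt; simpa using h1
    _ = r * Real.sqrt n := by
        rw [Real.sqrt_mul (by positivity), Real.sqrt_sq hr]; ring

lemma diam_axisCube {n : ℕ} (c : EuclideanSpace ℝ (Fin n)) {s : ℝ} (hs : 0 ≤ s) :
    Metric.diam (axisCube c s) = s * Real.sqrt n := by
  have hsub : ∀ x ∈ axisCube c s, ∀ y ∈ axisCube c s, dist x y ≤ s * Real.sqrt n := by
    intro x hx y hy
    refine dist_le_of_coord hs fun i => ?_
    calc |x i - y i| ≤ |x i - c i| + |c i - y i| := abs_sub_le _ _ _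
      _ ≤ s / 2 + s / 2 := add_le_add (hx i) (by rw [abs_sub_comm]; exact hy i)
      _ = s := by ring
  refine le_antisymm (Metric.diam_le_of_forall_dist_le (by positivity) hsub) ?_
  let p : EuclideanSpace ℝ (Fin n) := WithLp.toLp 2 (fun i => c i + s / 2)
  let q : EuclideanSpace ℝ (Fin n) := WithLp.toLp 2 (fun i => c i - s / 2)
  have hpm : p ∈ axisCube c s := fun i => by
    have : p i - c i = s / 2 := by show (c i + s / 2) - c i = s / 2; ring
    rw [this, abs_of_nonneg (by linarith : (0:ℝ) ≤ s/2)]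
  have hqm : q ∈ axisCube c s := fun i => by
    have : q i - c i = -(s/2) := by show (c i - s / 2) - c i = -(s/2); ring
    rw [this, abs_neg, abs_of_nonneg (by linarith : (0:ℝ) ≤ s/2)]
  have hbd : Bornology.IsBounded (axisCube c s) := by
    refine (Metric.isBounded_closedBall (x := c) (r := s * Real.sqrt n)).subset fun x hx => ?_
    exact Metric.mem_closedBall.mpr (hsub x hx c (fun i => by simpa using by positivity))
  have hdist : dist p q = s * Real.sqrt n := by
    rw [EuclideanSpace.dist_eq]
    have hc : ∀ i : Fin n, dist (p i) (q i) ^ 2 = s ^ 2 := fun i => by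
      rw [Real.dist_eq]
      have : p i - q i = s := by show (c i + s / 2) - (c i - s / 2) = s; ring
      rw [this, sq_abs]
    rw [Finset.sum_congr rfl fun i _ => hc i]
    simp [Finset.sum_const, Real.sqrt_mul (by positivity : (0:ℝ) ≤ (n:ℝ)), Real.sqrt_sq hs]
    ring
  calc s * Real.sqrt n = dist p q := hdist.symm
    _ ≤ Metric.diam (axisCube c s) := dist_le_diam_of_mem hbd hpm hqm

lemma isClosed_axisCube {n : ℕ} (c : EuclideanSpace ℝ (Fin n)) (s : ℝ) :
    IsClosed (axisCube c s) := by
  have h : axisCube c s = ⋂ i, {x : EuclideanSpace ℝ (Fin n) | |x i - c i| ≤ s / 2} := by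
    ext x; simp [axisCube, mem_iInter]
  rw [h]
  refine isClosed_iInter fun i => ?_
  have hc : Continuous fun x : EuclideanSpace ℝ (Fin n) => |x i - c i| := by
    have : Continuous fun x : EuclideanSpace ℝ (Fin n) => x i :=
      (EuclideanSpace.proj (𝕜 := ℝ) i).continuous
    exact (this.sub continuous_const).abs
  exact isClosed_le hc continuous_const

lemma axisCube_mono {n : ℕ} (c : EuclideanSpace ℝ (Fin n)) {s t : ℝ} (h : s ≤ t) :
    axisCube c s ⊆ axisCube c t := fun x hx i => (hx i).trans (by linarith)


set_option maxHeartbeats 2000000 in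
/-- Let `n ≥ 2`, let `ν` be a finite Borel measure on `ℝⁿ`, let `Γ` be a
rectifiable curve, and let `Q` be a cube (center `c`, side `sQ > 0`) with `Q ∩ Γ ≠ ∅` and
`ν(Q) > 0`. Let `a = 3 + 6√n` and `ε > 0` with `3(2/3)²a²ε² ≤ 1/2`. If
`β_Γ(aQ) < ε β₂(ν,3Q)`, then for any line `ℓ` with
`sup_{z ∈ Γ∩aQ} dist(z,ℓ) ≤ 2β_Γ(aQ) diam aQ`, one has
`β₂(ν,3Q)² ≤ 4 ∫_F (dist(x,Γ)/diam 3Q)² dν(x)/ν(3Q)` where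
`F = {x ∈ 3Q : dist(x,ℓ) > (2/3)aε β₂(ν,3Q) diam 3Q}`. -/
theorem beta2Sq_le_four_lintegral (n : ℕ) (hn : 2 ≤ n)
    (ν : Measure (EuclideanSpace ℝ (Fin n))) [IsFiniteMeasure ν]
    (Γ : Set (EuclideanSpace ℝ (Fin n))) (hΓ : IsRectifiableCurve Γ)
    (c : EuclideanSpace ℝ (Fin n)) (sQ : ℝ) (hsQ : 0 < sQ)
    (hQΓ : (axisCube c sQ ∩ Γ).Nonempty) (hQν : 0 < ν (axisCube c sQ))
    (a ε : ℝ) (ha : a = 3 + 6 * Real.sqrt n) (hε : 0 < ε)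
    (hε2 : 3 * (2 / 3) ^ 2 * a ^ 2 * ε ^ 2 ≤ 1 / 2)
    (hβ : betaSet Γ (axisCube c (a * sQ)) <
      ENNReal.ofReal ε * beta2Sq ν (axisCube c (3 * sQ)) ^ (1 / 2 : ℝ))
    (L : Set (EuclideanSpace ℝ (Fin n))) (hL : IsLine L)
    (hLsup : ∀ z ∈ Γ ∩ axisCube c (a * sQ),
      ENNReal.ofReal (Metric.infDist z L) ≤
        2 * betaSet Γ (axisCube c (a * sQ)) *
          ENNReal.ofReal (Metric.diam (axisCube c (a * sQ)))) :
    beta2Sq ν (axisCube c (3 * sQ)) ≤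
      4 * (∫⁻ x in {x ∈ axisCube c (3 * sQ) |
              ENNReal.ofReal ((2 / 3) * a * ε) * beta2Sq ν (axisCube c (3 * sQ)) ^ (1 / 2 : ℝ) *
                  ENNReal.ofReal (Metric.diam (axisCube c (3 * sQ)))
                < ENNReal.ofReal (Metric.infDist x L)},
            ENNReal.ofReal ((Metric.infDist x Γ / Metric.diam (axisCube c (3 * sQ))) ^ 2) ∂ν)
          / ν (axisCube c (3 * sQ)) := by
  classical
  obtain ⟨z₀, hz₀Q, hz₀Γ⟩ := hQΓ
  have hΓc : IsCompact Γ := by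
    obtain ⟨f, a1, b1, K, hfK, hΓeq⟩ := hΓ
    rw [hΓeq]; exact isCompact_Icc.image_of_continuousOn hfK.continuousOn
  have hΓne : Γ.Nonempty := ⟨z₀, hz₀Γ⟩
  set Q3 := axisCube c (3 * sQ) with hQ3def
  set Qa := axisCube c (a * sQ) with hQadef
  have hn1 : (1:ℝ) ≤ Real.sqrt n := by
    rw [show (1:ℝ) = Real.sqrt 1 by simp]
    exact Real.sqrt_le_sqrt (by exact_mod_cast le_trans one_le_two (by exact_mod_cast hn))
  have hsn0 : (0:ℝ) < Real.sqrt n := lt_of_lt_of_le one_pos hn1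
  have ha0 : 0 < a := by rw [ha]; nlinarith [Real.sqrt_nonneg (n:ℝ)]
  set D := Metric.diam Q3 with hDdef
  have hD : D = 3 * sQ * Real.sqrt n := by
    rw [hDdef, hQ3def, diam_axisCube c (by positivity)]
  have hD0 : 0 < D := by rw [hD]; positivity
  have hDa : Metric.diam Qa = a * sQ * Real.sqrt n := by
    rw [hQadef, diam_axisCube c (by positivity)]
  have hν3 : 0 < ν Q3 := lt_of_lt_of_le hQν (measure_mono (axisCube_mono c (by linarith)))
  have hν3ne : ν Q3 ≠ 0 := hν3.ne'
  have hν3top : ν Q3 ≠ ⊤ := measure_ne_top ν Q3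
  have hQ3meas : MeasurableSet Q3 := by rw [hQ3def]; exact (isClosed_axisCube c (3*sQ)).measurableSet
  -- β₂ is at most the normalized integral against L
  have hβ2L : beta2Sq ν Q3 ≤
      (∫⁻ x in Q3, ENNReal.ofReal ((infDist x L / Metric.diam Q3) ^ 2) ∂ν) / ν Q3 :=
    iInf₂_le L hL
  -- β₂ is finite
  have hfin : beta2Sq ν Q3 ≠ ⊤ := by
    obtain ⟨pL, vL, hvL, hLeq⟩ := hL
    have hpL : pL ∈ L := by rw [hLeq]; exact ⟨0, by simp⟩
    set M := D + dist c pL with hM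
    have hM0 : 0 ≤ M := by
      have h : (0:ℝ) ≤ dist c pL := dist_nonneg
      rw [hM]; linarith
    have hbound : ∀ x ∈ Q3, infDist x L ≤ M := by
      intro x hx
      calc infDist x L ≤ dist x pL := infDist_le_dist_of_mem hpL
        _ ≤ dist x c + dist c pL := dist_triangle _ _ _
        _ ≤ M := by
            have h1 : dist x c ≤ (3 * sQ / 2) * Real.sqrt n :=
              dist_le_of_coord (by positivity) (fun i => hx i)
            have h2 : (3 * sQ / 2) * Real.sqrt n ≤ D := by
              rw [hD]; nlinarith [hsQ.le]
            rw [hM]; linarith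
    have hIle : (∫⁻ x in Q3, ENNReal.ofReal ((infDist x L / Metric.diam Q3) ^ 2) ∂ν) ≤
        ENNReal.ofReal ((M / D) ^ 2) * ν Q3 := by
      rw [← setLIntegral_const]
      refine setLIntegral_mono' hQ3meas fun x hx => ENNReal.ofReal_le_ofReal ?_
      rw [← hDdef]
      have hd : infDist x L / D ≤ M / D := by gcongr; exact hbound x hx
      exact pow_le_pow_left₀ (div_nonneg infDist_nonneg hD0.le) hd 2
    have hne : (ENNReal.ofReal ((M / D) ^ 2) * ν Q3) / ν Q3 ≠ ⊤ := by
      rw [div_eq_mul_inv]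
      exact ENNReal.mul_ne_top (ENNReal.mul_ne_top ENNReal.ofReal_ne_top hν3top)
        (ENNReal.inv_ne_top.mpr hν3ne)
    exact ne_top_of_le_ne_top hne (hβ2L.trans (ENNReal.div_le_div_right hIle _))
  -- β₂ is positive
  have hβ0 : beta2Sq ν Q3 ≠ 0 := by
    intro h0
    rw [h0, ENNReal.zero_rpow_of_pos (by norm_num : (0:ℝ) < 1/2), mul_zero] at hβ
    exact (not_lt.mpr zero_le) hβ
  set B := (beta2Sq ν Q3).toReal with hBdef
  have hB0 : 0 < B := ENNReal.toReal_pos hβ0 hfin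
  have hBeq : beta2Sq ν Q3 = ENNReal.ofReal B := (ENNReal.ofReal_toReal hfin).symm
  set b := B ^ (1/2 : ℝ) with hbdef
  have hb0 : 0 < b := Real.rpow_pos_of_pos hB0 _
  have hb2 : b ^ 2 = B := by
    rw [hbdef, ← Real.rpow_natCast (B ^ (1/2:ℝ)) 2, ← Real.rpow_mul hB0.le]
    norm_num
  have hrpow : beta2Sq ν Q3 ^ (1/2 : ℝ) = ENNReal.ofReal b := by
    rw [hBeq, ENNReal.ofReal_rpow_of_pos hB0, hbdef]
  set T := 2 / 3 * a * ε * b * D with hTdef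
  have hT0 : 0 ≤ T := by
    rw [hTdef]
    have h1 : (0:ℝ) < 2 / 3 * a := by linarith
    exact (mul_pos (mul_pos (mul_pos h1 hε) hb0) hD0).le
  -- every point of Γ ∩ aQ is within T of L
  have hβ' : betaSet Γ Qa ≤ ENNReal.ofReal ε * ENNReal.ofReal b := by
    rw [hrpow] at hβ; exact hβ.le
  have hzL : ∀ z ∈ Γ ∩ Qa, infDist z L ≤ T := by
    intro z hz
    have h1 := hLsup z hz
    have h2e : (2:ℝ≥0∞) * (ENNReal.ofReal ε * ENNReal.ofReal b) * ENNReal.ofReal (Metric.diam Qa)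
        = ENNReal.ofReal (2 * (ε * b) * Metric.diam Qa) := by
      rw [ENNReal.ofReal_mul (by positivity), ENNReal.ofReal_mul (by norm_num),
        ENNReal.ofReal_mul hε.le]
      norm_num
    have h2 : (2 : ℝ≥0∞) * betaSet Γ Qa * ENNReal.ofReal (Metric.diam Qa)
        ≤ ENNReal.ofReal T := by
      calc 2 * betaSet Γ Qa * ENNReal.ofReal (Metric.diam Qa)
          ≤ 2 * (ENNReal.ofReal ε * ENNReal.ofReal b) * ENNReal.ofReal (Metric.diam Qa) := by
            gcongr
        _ = ENNReal.ofReal (2 * (ε * b) * Metric.diam Qa) := h2e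
        _ ≤ ENNReal.ofReal T := ENNReal.ofReal_le_ofReal
            (le_of_eq (by rw [hTdef, hDa, hD]; ring))
    exact (ENNReal.ofReal_le_ofReal_iff hT0).mp (h1.trans h2)
  -- for x ∈ 3Q, dist to L is at most dist to Γ plus T
  have hnear : ∀ x ∈ Q3, infDist x L ≤ infDist x Γ + T := by
    intro x hx
    obtain ⟨y, hyΓ, hyd⟩ := hΓc.exists_infDist_eq_dist hΓne x
    have hxz : dist x z₀ ≤ 2 * sQ * Real.sqrt n := by
      refine dist_le_of_coord (by positivity) fun i => ?_
      calc |x i - z₀ i| ≤ |x i - c i| + |c i - z₀ i| := abs_sub_le _ _ _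
        _ ≤ 3 * sQ / 2 + sQ / 2 := add_le_add (hx i) (by rw [abs_sub_comm]; exact hz₀Q i)
        _ = 2 * sQ := by ring
    have hxy : dist x y ≤ 2 * sQ * Real.sqrt n := by
      rw [← hyd]; exact (infDist_le_dist_of_mem hz₀Γ).trans hxz
    have hyQa : y ∈ Qa := by
      rw [hQadef]
      intro i
      calc |y i - c i| ≤ |y i - x i| + |x i - c i| := abs_sub_le _ _ _
        _ ≤ dist y x + 3 * sQ / 2 := add_le_add (coord_abs_le_dist y x i) (hx i)
        _ ≤ 2 * sQ * Real.sqrt n + 3 * sQ / 2 := by rw [dist_comm]; linarith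
        _ ≤ a * sQ / 2 := by rw [ha]; nlinarith [hsQ.le]
    calc infDist x L ≤ infDist y L + dist x y := infDist_le_infDist_add_dist
      _ ≤ T + infDist x Γ := add_le_add (hzL y ⟨hyΓ, hyQa⟩) (le_of_eq hyd.symm)
      _ = infDist x Γ + T := add_comm _ _
  -- the exceptional set
  set Fs := {x ∈ Q3 | T < infDist x L} with hFdef
  have hFsub : Fs ⊆ Q3 := fun x hx => hx.1
  have hFmeas : MeasurableSet Fs := by
    have h : Fs = Q3 ∩ {x | T < infDist x L} := rfl
    rw [h]
    exact hQ3meas.inter (isOpen_lt continuous_const (continuous_infDist_pt L)).measurableSet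
  have hth : ENNReal.ofReal (2 / 3 * a * ε) * beta2Sq ν Q3 ^ (1/2:ℝ) * ENNReal.ofReal D
      = ENNReal.ofReal T := by
    rw [hrpow, ← ENNReal.ofReal_mul (by positivity), ← ENNReal.ofReal_mul (by positivity),
      hTdef]
  have hgoalset : {x ∈ Q3 | ENNReal.ofReal (2 / 3 * a * ε) * beta2Sq ν Q3 ^ (1/2:ℝ) *
      ENNReal.ofReal D < ENNReal.ofReal (infDist x L)} = Fs := by
    simp only [hth]
    ext x
    simp only [Set.mem_sep_iff, hFdef]
    exact and_congr_right fun _ => ENNReal.ofReal_lt_ofReal_iff_of_nonneg hT0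
  set C := ENNReal.ofReal ((T / D) ^ 2) with hCdef
  have hmeasΓ : Measurable fun x : EuclideanSpace ℝ (Fin n) =>
      ENNReal.ofReal ((infDist x Γ / D) ^ 2) :=
    (ENNReal.continuous_ofReal.comp (((continuous_infDist_pt Γ).div_const D).pow 2)).measurable
  set J := ∫⁻ x in Fs, ENNReal.ofReal ((infDist x Γ / D) ^ 2) ∂ν with hJdef
  have hsplit : (∫⁻ x in Q3, ENNReal.ofReal ((infDist x L / D) ^ 2) ∂ν)
      ≤ 2 * J + 3 * C * ν Q3 := by
    have h0 : (∫⁻ x in Q3, ENNReal.ofReal ((infDist x L / D) ^ 2) ∂ν)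
        ≤ (∫⁻ x in Fs, ENNReal.ofReal ((infDist x L / D) ^ 2) ∂ν)
          + ∫⁻ x in Q3 \ Fs, ENNReal.ofReal ((infDist x L / D) ^ 2) ∂ν :=
      le_trans (lintegral_mono_set (Set.union_diff_cancel hFsub).symm.subset)
        (lintegral_union_le _ _ _)
    have h1 : (∫⁻ x in Q3 \ Fs, ENNReal.ofReal ((infDist x L / D) ^ 2) ∂ν) ≤ C * ν Q3 := by
      calc (∫⁻ x in Q3 \ Fs, ENNReal.ofReal ((infDist x L / D) ^ 2) ∂ν)
          ≤ ∫⁻ _x in Q3 \ Fs, C ∂ν := by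
            refine setLIntegral_mono' (hQ3meas.diff hFmeas) fun x hx => ?_
            have hle : infDist x L ≤ T := not_lt.mp fun h => hx.2 ⟨hx.1, h⟩
            rw [hCdef]
            refine ENNReal.ofReal_le_ofReal ?_
            have hd : infDist x L / D ≤ T / D := by gcongr
            exact pow_le_pow_left₀ (div_nonneg infDist_nonneg hD0.le) hd 2
        _ = C * ν (Q3 \ Fs) := setLIntegral_const _ _
        _ ≤ C * ν Q3 := mul_le_mul_right (measure_mono Set.diff_subset) _
    have h2 : (∫⁻ x in Fs, ENNReal.ofReal ((infDist x L / D) ^ 2) ∂ν)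
        ≤ 2 * J + 2 * C * ν Q3 := by
      calc (∫⁻ x in Fs, ENNReal.ofReal ((infDist x L / D) ^ 2) ∂ν)
          ≤ ∫⁻ x in Fs, (2 * ENNReal.ofReal ((infDist x Γ / D) ^ 2) + 2 * C) ∂ν := by
            refine setLIntegral_mono' hFmeas fun x hx => ?_
            have hle : infDist x L ≤ infDist x Γ + T := hnear x hx.1
            have hreal : (infDist x L / D) ^ 2
                ≤ 2 * (infDist x Γ / D) ^ 2 + 2 * (T / D) ^ 2 := by
              have h3 : infDist x L / D ≤ infDist x Γ / D + T / D := by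
                rw [← add_div]; gcongr
              have h4 : (0:ℝ) ≤ infDist x L / D := div_nonneg infDist_nonneg hD0.le
              nlinarith [sq_nonneg (infDist x Γ / D - T / D), h3, h4]
            calc ENNReal.ofReal ((infDist x L / D) ^ 2)
                ≤ ENNReal.ofReal (2 * (infDist x Γ / D) ^ 2 + 2 * (T / D) ^ 2) :=
                  ENNReal.ofReal_le_ofReal hreal
              _ = 2 * ENNReal.ofReal ((infDist x Γ / D) ^ 2) + 2 * C := by
                  rw [ENNReal.ofReal_add (by positivity) (by positivity),
                    ENNReal.ofReal_mul (by norm_num : (0:ℝ) ≤ 2),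
                    ENNReal.ofReal_mul (by norm_num : (0:ℝ) ≤ 2), hCdef]
                  norm_num
        _ = 2 * J + 2 * C * ν Fs := by
            rw [lintegral_add_left (hmeasΓ.const_mul 2), lintegral_const_mul 2 hmeasΓ,
              setLIntegral_const]
        _ ≤ 2 * J + 2 * C * ν Q3 :=
            add_le_add le_rfl (mul_le_mul_right (measure_mono hFsub) _)
    calc (∫⁻ x in Q3, ENNReal.ofReal ((infDist x L / D) ^ 2) ∂ν)
        ≤ (2 * J + 2 * C * ν Q3) + C * ν Q3 := le_trans h0 (add_le_add h2 h1)
      _ = 2 * J + 3 * C * ν Q3 := by ring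
  have hmain : beta2Sq ν Q3 ≤ 2 * (J / ν Q3) + 3 * C := by
    calc beta2Sq ν Q3
        ≤ (∫⁻ x in Q3, ENNReal.ofReal ((infDist x L / D) ^ 2) ∂ν) / ν Q3 := by
          rw [hDdef]; exact hβ2L
      _ ≤ (2 * J + 3 * C * ν Q3) / ν Q3 := ENNReal.div_le_div_right hsplit _
      _ = 2 * J / ν Q3 + 3 * C * ν Q3 / ν Q3 := ENNReal.add_div
      _ = 2 * (J / ν Q3) + 3 * C := by
          rw [mul_div_assoc, mul_div_assoc, ENNReal.div_self hν3ne hν3top, mul_one]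
  have h3C : 3 * C ≤ ENNReal.ofReal (B / 2) := by
    have he : (3:ℝ≥0∞) * C = ENNReal.ofReal (3 * (T / D) ^ 2) := by
      rw [hCdef, ENNReal.ofReal_mul (by norm_num : (0:ℝ) ≤ 3)]
      norm_num
    rw [he]
    apply ENNReal.ofReal_le_ofReal
    have hTD : T / D = 2 / 3 * a * ε * b := by
      rw [hTdef, mul_div_assoc, div_self hD0.ne', mul_one]
    rw [hTD]
    calc 3 * (2 / 3 * a * ε * b) ^ 2 = (3 * (2/3)^2 * a^2 * ε^2) * B := by rw [← hb2]; ring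
      _ ≤ (1/2) * B := mul_le_mul_of_nonneg_right hε2 hB0.le
      _ = B / 2 := by ring
  have hfinal : ENNReal.ofReal B ≤ 2 * (J / ν Q3) + ENNReal.ofReal (B / 2) := by
    rw [← hBeq]; exact hmain.trans (add_le_add le_rfl h3C)
  have hBsplit : ENNReal.ofReal B = ENNReal.ofReal (B / 2) + ENNReal.ofReal (B / 2) := by
    rw [← ENNReal.ofReal_add (by linarith) (by linarith)]; norm_num
  have hhalf : ENNReal.ofReal (B / 2) ≤ 2 * (J / ν Q3) := by
    rw [hBsplit] at hfinal
    exact (ENNReal.add_le_add_iff_right ENNReal.ofReal_ne_top).mp hfinal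
  rw [hgoalset, ← hJdef]
  calc beta2Sq ν Q3 = ENNReal.ofReal (B / 2) + ENNReal.ofReal (B / 2) := by
        rw [hBeq, hBsplit]
    _ ≤ 2 * (J / ν Q3) + 2 * (J / ν Q3) := add_le_add hhalf hhalf
    _ = 4 * (J / ν Q3) := by ring
    _ = 4 * J / ν Q3 := (mul_div_assoc _ _ _).symm

end
end
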